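/- (Klein's inequality) For density matrices ρ and σ on a finite-dimensional Hilbert space with supp(ρ) ⊆ supp(σ), the quantum relative entropy H(ρ‖σ) = tr(ρ log ρ) − tr(ρ log σ) is non-negative, with equality if and only if ρ = σ. -/

import Mathlib

open Matrix
open scoped ComplexOrder

variable {n : Type*}

/-- The matrix logarithm of a Hermitian matrix, defined via its spectral decomposition,
with the convention `log 0 = 0` (so the logarithm is taken on the support). -/
noncomputable def hermitianLog [Fintype n] [DecidableEq n]
    {A : Matrix n n ℂ} (hA : A.IsHermitian) : Matrix n n ℂ :=
  (hA.eigenvectorUnitary : Matrix n n ℂ) *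
    Matrix.diagonal (fun i => (Real.log (hA.eigenvalues i) : ℂ)) *
    (star (hA.eigenvectorUnitary : Matrix n n ℂ))

lemma klein_scalar (p q c : ℝ) (hp : 0 ≤ p) (hq : 0 ≤ q) (hc : 0 ≤ c)
    (hs : q = 0 → p * c = 0) :
    p * c - q * c ≤ p * c * (Real.log p - Real.log q) ∧
      (p * c - q * c = p * c * (Real.log p - Real.log q) ↔ (c ≠ 0 → p = q)) := by
  rcases eq_or_lt_of_le hc with hc0 | hc0
  · simp [← hc0]
  rcases eq_or_lt_of_le hp with hp0 | hp0
  · rw [← hp0]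
    refine ⟨by nlinarith, ?_, ?_⟩
    · intro h hcne
      have hqc : q * c = 0 := by linarith
      have : q = 0 := by
        rcases mul_eq_zero.1 hqc with h' | h'
        · exact h'
        · exact absurd h' hcne
      linarith
    · intro h
      have h0 : q = 0 := (h hc0.ne').symm
      rw [h0]; ring
  · have hq0 : 0 < q := by
      rcases eq_or_lt_of_le hq with h | h
      · exact absurd (hs h.symm) (by positivity)
      · exact h
    have hl : Real.log (q / p) ≤ q / p - 1 := Real.log_le_sub_one_of_pos (by positivity)
    have hld : Real.log (q / p) = Real.log q - Real.log p := Real.log_div hq0.ne' hp0.ne'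
    constructor
    · rw [← sub_nonneg]
      have : p * c * (Real.log p - Real.log q) - (p * c - q * c)
          = p * c * ((q / p - 1) - Real.log (q / p)) := by
        rw [hld]; field_simp; ring
      rw [this]
      have := sub_nonneg.2 hl
      positivity
    · constructor
      · intro h _
        by_contra hne
        have hne' : q / p ≠ 1 := by
          intro h1; exact hne (by field_simp at h1; linarith)
        have hl' : Real.log (q / p) < q / p - 1 :=
          Real.log_lt_sub_one_of_pos (by positivity) hne'
        have : p * c - q * c < p * c * (Real.log p - Real.log q) := by
          rw [← sub_pos]
          have e : p * c * (Real.log p - Real.log q) - (p * c - q * c)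
              = p * c * ((q / p - 1) - Real.log (q / p)) := by
            rw [hld]; field_simp; ring
          rw [e]
          have := sub_pos.2 hl'
          positivity
        linarith
      · intro h
        have := h hc0.ne'
        subst this
        ring

/-- Klein's inequality: for density matrices `ρ`, `σ` with `supp ρ ⊆ supp σ`,
the quantum relative entropy `tr(ρ log ρ) − tr(ρ log σ)` is non-negative, and it
vanishes if and only if `ρ = σ`. -/
theorem klein_inequality [Fintype n] [DecidableEq n]
    (ρ σ : Matrix n n ℂ) (hρ : ρ.PosSemidef) (hσ : σ.PosSemidef)
    (hρ1 : ρ.trace = 1) (hσ1 : σ.trace = 1)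
    (hsupp : ∀ v : n → ℂ, σ *ᵥ v = 0 → ρ *ᵥ v = 0) :
    0 ≤ ((ρ * hermitianLog hρ.1).trace - (ρ * hermitianLog hσ.1).trace).re ∧
      (((ρ * hermitianLog hρ.1).trace - (ρ * hermitianLog hσ.1).trace).re = 0 ↔ ρ = σ) := by
  -- the easy (backward) direction first
  have hback : ρ = σ →
      ((ρ * hermitianLog hρ.1).trace - (ρ * hermitianLog hσ.1).trace).re = 0 := by
    intro h
    subst h
    have : hermitianLog hρ.1 = hermitianLog hσ.1 := rfl
    rw [this, sub_self]
    simp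
  -- setup
  set U : Matrix n n ℂ := (hρ.1.eigenvectorUnitary : Matrix n n ℂ) with hUdef
  set V : Matrix n n ℂ := (hσ.1.eigenvectorUnitary : Matrix n n ℂ) with hVdef
  set p : n → ℝ := hρ.1.eigenvalues with hpdef
  set q : n → ℝ := hσ.1.eigenvalues with hqdef
  have hdecρ : ρ = U * diagonal (fun i => (p i : ℂ)) * star U := hρ.1.spectral_theorem
  have hdecσ : σ = V * diagonal (fun j => (q j : ℂ)) * star V := hσ.1.spectral_theorem
  have hU1 : U * star U = 1 := (Matrix.mem_unitaryGroup_iff).mp hρ.1.eigenvectorUnitary.2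
  have hU2 : star U * U = 1 := (Matrix.mem_unitaryGroup_iff').mp hρ.1.eigenvectorUnitary.2
  have hV1 : V * star V = 1 := (Matrix.mem_unitaryGroup_iff).mp hσ.1.eigenvectorUnitary.2
  have hV2 : star V * V = 1 := (Matrix.mem_unitaryGroup_iff').mp hσ.1.eigenvectorUnitary.2
  have hlogρ : hermitianLog hρ.1 = U * diagonal (fun i => (Real.log (p i) : ℂ)) * star U := rfl
  have hlogσ : hermitianLog hσ.1 = V * diagonal (fun j => (Real.log (q j) : ℂ)) * star V := rfl
  have hp : ∀ i, 0 ≤ p i := fun i => hρ.eigenvalues_nonneg i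
  have hq : ∀ j, 0 ≤ q j := fun j => hσ.eigenvalues_nonneg j
  set W : Matrix n n ℂ := star U * V with hWdef
  have hWst : star W = star V * U := by rw [hWdef, StarMul.star_mul, star_star]
  set P : n → n → ℝ := fun i j => Complex.normSq (W i j) with hPdef
  have hPnn : ∀ i j, 0 ≤ P i j := fun i j => Complex.normSq_nonneg _
  -- unitarity of W
  have hWW : W * star W = 1 := by
    rw [hWdef, hWst]
    calc star U * V * (star V * U) = star U * (V * star V) * U := by
          simp only [Matrix.mul_assoc]
      _ = 1 := by rw [hV1, Matrix.mul_one, hU2]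
  have hWW' : star W * W = 1 := by
    rw [hWdef, hWst]
    calc star V * U * (star U * V) = star V * (U * star U) * V := by
          simp only [Matrix.mul_assoc]
      _ = 1 := by rw [hU1, Matrix.mul_one, hV2]
  have hrow : ∀ i, ∑ j, P i j = 1 := by
    intro i
    have h1 : (W * star W) i i = 1 := by rw [hWW]; simp
    rw [Matrix.mul_apply] at h1
    have : ∑ j, ((P i j : ℂ)) = 1 := by
      rw [← h1]
      refine Finset.sum_congr rfl fun j _ => ?_
      rw [Matrix.star_apply, ← Complex.mul_conj]
      simp [Complex.star_def, hPdef]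
    exact_mod_cast this
  have hcol : ∀ j, ∑ i, P i j = 1 := by
    intro j
    have h1 : (star W * W) j j = 1 := by rw [hWW']; simp
    rw [Matrix.mul_apply] at h1
    have : ∑ i, ((P i j : ℂ)) = 1 := by
      rw [← h1]
      refine Finset.sum_congr rfl fun i _ => ?_
      rw [Matrix.star_apply, hPdef, Complex.normSq_eq_conj_mul_self]
      simp [Complex.star_def]
    exact_mod_cast this
  -- eigenvalue sums
  have hps : ∑ i, p i = 1 := by
    have h1 : (U * diagonal (fun i => (p i : ℂ)) * star U).trace = ∑ i, ((p i : ℂ)) := by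
      rw [trace_mul_cycle, hU2, Matrix.one_mul, trace_diagonal]
    rw [hdecρ, h1] at hρ1
    exact_mod_cast hρ1
  have hqs : ∑ j, q j = 1 := by
    have h1 : (V * diagonal (fun j => (q j : ℂ)) * star V).trace = ∑ j, ((q j : ℂ)) := by
      rw [trace_mul_cycle, hV2, Matrix.one_mul, trace_diagonal]
    rw [hdecσ, h1] at hσ1
    exact_mod_cast hσ1
  -- support condition in the eigenbases
  have hsupp' : ∀ i j, q j = 0 → p i * P i j = 0 := by
    intro i j hqj
    obtain ⟨v, hvdef⟩ : ∃ v : n → ℂ, v = V *ᵥ Pi.single j 1 := ⟨_, rfl⟩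
    have hσv : σ *ᵥ v = 0 := by
      rw [hdecσ, hvdef, mulVec_mulVec, Matrix.mul_assoc, Matrix.mul_assoc,
        ← mulVec_mulVec, ← mulVec_mulVec, hV2, one_mulVec, diagonal_mulVec_single]
      simp [hqj]
    have hρv : ρ *ᵥ v = 0 := hsupp v hσv
    have hw : (star U) *ᵥ v = fun i => W i j := by
      rw [hvdef, mulVec_mulVec, ← hWdef]
      simp; rfl
    have hdot : star v ⬝ᵥ (ρ *ᵥ v) = ∑ i, ((p i * P i j : ℝ) : ℂ) := by
      rw [hdecρ, ← mulVec_mulVec, ← mulVec_mulVec, dotProduct_mulVec]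
      have hstarstar : (star U)ᴴ = U := by
        rw [← Matrix.star_eq_conjTranspose, star_star]
      have hsv : star v ᵥ* U = star ((star U) *ᵥ v) := by
        rw [star_mulVec, hstarstar]
      rw [hsv, hw, dotProduct_mulVec]
      have hd : (star fun i => W i j) ᵥ* diagonal (fun i => (p i : ℂ))
          = fun i => star (W i j) * (p i : ℂ) := by
        ext i
        rw [vecMul_diagonal]
        rfl
      rw [hd, dotProduct]
      refine Finset.sum_congr rfl fun i _ => ?_
      push_cast
      rw [hPdef, Complex.normSq_eq_conj_mul_self]
      simp only [Complex.star_def]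
      ring
    have hzero : ∑ i, ((p i * P i j : ℝ) : ℂ) = 0 := by
      rw [← hdot, hρv, dotProduct_zero]
    have hzero' : ∑ i, p i * P i j = 0 := by exact_mod_cast hzero
    exact (Finset.sum_eq_zero_iff_of_nonneg
      (fun i _ => mul_nonneg (hp i) (hPnn i j))).1 hzero' i (Finset.mem_univ i)
  -- trace computations
  set Dp : Matrix n n ℂ := diagonal (fun i => (p i : ℂ)) with hDp
  set Dlq : Matrix n n ℂ := diagonal (fun j => (Real.log (q j) : ℂ)) with hDlq
  have t1 : (ρ * hermitianLog hρ.1).trace = ∑ i, ((p i * Real.log (p i) : ℝ) : ℂ) := by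
    rw [hlogρ]; nth_rewrite 1 [hdecρ]
    have e : U * Dp * star U * (U * diagonal (fun i => (Real.log (p i) : ℂ)) * star U)
        = U * (Dp * diagonal (fun i => (Real.log (p i) : ℂ))) * star U := by
      rw [Matrix.mul_assoc, Matrix.mul_assoc, Matrix.mul_assoc]
      rw [← Matrix.mul_assoc (star U), hU2, Matrix.one_mul]
      simp [← Matrix.mul_assoc, Matrix.diagonal_mul_diagonal]
    rw [e, trace_mul_cycle, ← Matrix.mul_assoc, hU2, Matrix.one_mul, hDp,
      diagonal_mul_diagonal, trace_diagonal]
    push_cast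
    rfl
  have t2 : (ρ * hermitianLog hσ.1).trace
      = ∑ i, ∑ j, ((p i * Real.log (q j) * P i j : ℝ) : ℂ) := by
    rw [hlogσ]; nth_rewrite 1 [hdecρ]
    have e : (U * Dp * star U) * (V * Dlq * star V) = U * (Dp * W * Dlq * star W) * star U := by
      rw [hWst, hWdef]
      simp only [Matrix.mul_assoc]
      rw [hU1, Matrix.mul_one]
    have entry : ∀ i j : n, (Dp * W) i j * ((Dlq * star W) j i)
        = ((p i * Real.log (q j) * P i j : ℝ) : ℂ) := by
      intro i j
      rw [hDp, hDlq, Matrix.diagonal_mul, Matrix.diagonal_mul, Matrix.star_apply]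
      push_cast
      rw [hPdef, ← Complex.mul_conj]
      simp only [Complex.star_def]
      ring
    rw [e, trace_mul_cycle, ← Matrix.mul_assoc, hU2, Matrix.one_mul]
    rw [Matrix.mul_assoc (Dp * W), Matrix.trace]
    refine Finset.sum_congr rfl fun i _ => ?_
    rw [Matrix.diag_apply, Matrix.mul_apply]
    exact Finset.sum_congr rfl fun j _ => entry i j
  -- the difference of traces, as a real double sum
  have hre : ((ρ * hermitianLog hρ.1).trace - (ρ * hermitianLog hσ.1).trace).re
      = (∑ i, p i * Real.log (p i)) - ∑ i, ∑ j, p i * Real.log (q j) * P i j := by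
    rw [t1, t2]
    have c1 : ∑ i, ((p i * Real.log (p i) : ℝ) : ℂ)
        = ((∑ i, p i * Real.log (p i) : ℝ) : ℂ) := by push_cast; rfl
    have c2 : ∑ i, ∑ j, ((p i * Real.log (q j) * P i j : ℝ) : ℂ)
        = ((∑ i, ∑ j, p i * Real.log (q j) * P i j : ℝ) : ℂ) := by push_cast; rfl
    rw [c1, c2, ← Complex.ofReal_sub, Complex.ofReal_re]
  have key : ∀ i, p i * Real.log (p i) - ∑ j, p i * Real.log (q j) * P i j
      = ∑ j, p i * P i j * (Real.log (p i) - Real.log (q j)) := by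
    intro i
    have e1 : ∑ j, p i * P i j * (Real.log (p i) - Real.log (q j))
        = (∑ j, p i * P i j * Real.log (p i)) - ∑ j, p i * P i j * Real.log (q j) := by
      rw [← Finset.sum_sub_distrib]
      exact Finset.sum_congr rfl fun j _ => by ring
    rw [e1]
    congr 1
    · calc p i * Real.log (p i) = (∑ j, P i j) * (p i * Real.log (p i)) := by
            rw [hrow]; ring
        _ = ∑ j, p i * P i j * Real.log (p i) := by
            rw [Finset.sum_mul]
            exact Finset.sum_congr rfl fun j _ => by ring
    · exact Finset.sum_congr rfl fun j _ => by ring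
  have hD : ((ρ * hermitianLog hρ.1).trace - (ρ * hermitianLog hσ.1).trace).re
      = ∑ x : n × n, p x.1 * P x.1 x.2 * (Real.log (p x.1) - Real.log (q x.2)) := by
    rw [hre, ← Finset.univ_product_univ, Finset.sum_product, ← Finset.sum_sub_distrib]
    exact Finset.sum_congr rfl fun i _ => key i
  -- lower-bound sum
  have hFsum : ∑ x : n × n, (p x.1 * P x.1 x.2 - q x.2 * P x.1 x.2) = 0 := by
    rw [← Finset.univ_product_univ, Finset.sum_product]
    have e1 : ∀ i : n, ∑ j, (p i * P i j - q j * P i j)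
        = p i - ∑ j, q j * P i j := by
      intro i
      rw [Finset.sum_sub_distrib]
      congr 1
      rw [← Finset.mul_sum, hrow, mul_one]
    have e2 : ∑ j, ∑ i, (q j * P i j) = 1 := by
      have : ∀ j : n, ∑ i, q j * P i j = q j := by
        intro j
        rw [← Finset.mul_sum, hcol, mul_one]
      rw [Finset.sum_congr rfl fun j _ => this j, hqs]
    calc ∑ i, ∑ j, (p i * P i j - q j * P i j)
        = ∑ i, (p i - ∑ j, q j * P i j) := Finset.sum_congr rfl fun i _ => e1 i
      _ = (∑ i, p i) - ∑ i, ∑ j, q j * P i j := by rw [Finset.sum_sub_distrib]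
      _ = 1 - 1 := by rw [hps, Finset.sum_comm, e2]
      _ = 0 := by ring
  -- termwise comparison
  have hterm : ∀ x : n × n,
      p x.1 * P x.1 x.2 - q x.2 * P x.1 x.2
        ≤ p x.1 * P x.1 x.2 * (Real.log (p x.1) - Real.log (q x.2)) ∧
      (p x.1 * P x.1 x.2 - q x.2 * P x.1 x.2
        = p x.1 * P x.1 x.2 * (Real.log (p x.1) - Real.log (q x.2)) ↔
        (P x.1 x.2 ≠ 0 → p x.1 = q x.2)) :=
    fun x => klein_scalar (p x.1) (q x.2) (P x.1 x.2) (hp x.1) (hq x.2) (hPnn x.1 x.2)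
      (fun h => hsupp' x.1 x.2 h)
  have hineq : 0 ≤ ((ρ * hermitianLog hρ.1).trace - (ρ * hermitianLog hσ.1).trace).re := by
    rw [hD, ← hFsum]
    exact Finset.sum_le_sum fun x _ => (hterm x).1
  refine ⟨hineq, ?_, hback⟩
  -- forward direction of the iff
  intro h0
  have hsumeq : ∑ x : n × n, (p x.1 * P x.1 x.2 - q x.2 * P x.1 x.2)
      = ∑ x : n × n, p x.1 * P x.1 x.2 * (Real.log (p x.1) - Real.log (q x.2)) := by
    rw [← hD, h0, hFsum]
  have hall := (Finset.sum_eq_sum_iff_of_le (fun x _ => (hterm x).1)).1 hsumeq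
  have heq : ∀ i j : n, W i j ≠ 0 → p i = q j := by
    intro i j hW
    have hP : P i j ≠ 0 := by
      rw [hPdef]
      simpa [Complex.normSq_eq_zero] using hW
    exact ((hterm (i, j)).2.1 (hall (i, j) (Finset.mem_univ _))) hP
  -- reconstruct σ = ρ
  have hDW : Dp * W = W * diagonal (fun j => (q j : ℂ)) := by
    ext i j
    rw [hDp, Matrix.diagonal_mul, Matrix.mul_diagonal]
    by_cases hW : W i j = 0
    · simp [hW]
    · rw [heq i j hW]; ring
  have hUV : U * W = V := by
    rw [hWdef, ← Matrix.mul_assoc, hU1, Matrix.one_mul]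
  have hrec : V * diagonal (fun j => (q j : ℂ)) * star V = U * Dp * star U := by
    calc V * diagonal (fun j => (q j : ℂ)) * star V
        = U * (W * diagonal (fun j => (q j : ℂ)) * star W) * star U := by
          rw [← hUV, StarMul.star_mul]
          simp only [Matrix.mul_assoc]
      _ = U * (Dp * (W * star W)) * star U := by
          rw [← hDW]
          simp only [Matrix.mul_assoc]
      _ = U * Dp * star U := by
          rw [hWW, Matrix.mul_one]
  rw [hdecρ, hdecσ, hrec]
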